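/- Let Ã, βγh₂h₃ς, B̃ > 0. Suppose w ∈ C⁴([0,L]) and u ∈ C²([0,L]) satisfy Ã w_{xxxx} - βγh₂h₃ς B̃ u_x = 0, ςC̃ u - u_{xx} + B̃ w_{xxx} = 0 with ςC̃ > 0, and the boundary conditions w(0)=w_x(0)=u(0)=w_{xx}(L)=u_x(L)=0 and Ã w_{xxx}(L) - βγh₂h₃ς B̃ u(L) = 0. Then w ≡ 0 and u ≡ 0. -/

import Mathlib

open Set


/-- The kernel of the electrostatic Mead-Marcus generator is trivial: if
`Ã w'''' - k B̃ u' = 0` and `ς̃C u - u'' + B̃ w''' = 0` on `[0,L]` with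
`Ã, k = βγh₂h₃ς, B̃, ςC̃ > 0`, boundary conditions
`w(0) = w'(0) = u(0) = w''(L) = u'(L) = 0` and `Ã w'''(L) - k B̃ u(L) = 0`,
then `w ≡ 0` and `u ≡ 0`. -/
theorem stmt_14 (L Atil k Btil sC : ℝ)
    (hL : 0 < L) (hA : 0 < Atil) (hk : 0 < k) (hB : 0 < Btil) (hsC : 0 < sC)
    (w u : ℝ → ℝ) (hw : ContDiff ℝ 4 w) (hu : ContDiff ℝ 2 u)
    (heq₁ : ∀ x ∈ Set.Icc (0 : ℝ) L,
      Atil * deriv (deriv (deriv (deriv w))) x - k * Btil * deriv u x = 0)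
    (heq₂ : ∀ x ∈ Set.Icc (0 : ℝ) L,
      sC * u x - deriv (deriv u) x + Btil * deriv (deriv (deriv w)) x = 0)
    (hbc : w 0 = 0 ∧ deriv w 0 = 0 ∧ u 0 = 0 ∧ deriv (deriv w) L = 0 ∧
      deriv u L = 0)
    (hbcL : Atil * deriv (deriv (deriv w)) L - k * Btil * u L = 0) :
    ∀ x ∈ Set.Icc (0 : ℝ) L, w x = 0 ∧ u x = 0 := by
  obtain ⟨hw0, hw'0, hu0, hw''L, hu'L⟩ := hbc
  -- basic smoothness facts
  have hw4 : ContDiff ℝ ((0 : ℕ) + (4:ℕ) : ℕ) w := by exact_mod_cast hw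
  have hw3 : ContDiff ℝ ((1 : ℕ) + (3:ℕ) : ℕ) w := by exact_mod_cast hw
  have hw2 : ContDiff ℝ ((2 : ℕ) + (2:ℕ) : ℕ) w := by exact_mod_cast hw
  have hw1 : ContDiff ℝ ((3 : ℕ) + (1:ℕ) : ℕ) w := by exact_mod_cast hw
  have hd3 : ContDiff ℝ 1 (deriv (deriv (deriv w))) := hw3.iterate_deriv' 1 3
  have hd2 : ContDiff ℝ 2 (deriv (deriv w)) := by exact_mod_cast hw2.iterate_deriv' 2 2
  have hd1 : ContDiff ℝ 3 (deriv w) := by exact_mod_cast hw1.iterate_deriv' 3 1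
  have hu2 : ContDiff ℝ ((1 : ℕ) + (1:ℕ) : ℕ) u := by exact_mod_cast hu
  have hdu : ContDiff ℝ 1 (deriv u) := by exact_mod_cast hu2.iterate_deriv' 1 1
  have hud : Differentiable ℝ u := hu.differentiable (by norm_num)
  have hdud : Differentiable ℝ (deriv u) := hdu.differentiable (by norm_num)
  have hd3d : Differentiable ℝ (deriv (deriv (deriv w))) := hd3.differentiable (by norm_num)
  have hd2d : Differentiable ℝ (deriv (deriv w)) := hd2.differentiable (by norm_num)
  have hd1d : Differentiable ℝ (deriv w) := hd1.differentiable (by norm_num)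
  have hwd : Differentiable ℝ w := hw.differentiable (by norm_num)
  -- Step A: Atil * w''' = k*Btil*u on Icc
  set f : ℝ → ℝ := fun x => Atil * deriv (deriv (deriv w)) x - k * Btil * u x with hf_def
  have hfd : Differentiable ℝ f := ((hd3d.const_mul Atil).sub (hud.const_mul (k*Btil)))
  have hfc : ∀ x ∈ Icc (0:ℝ) L, f x = f 0 := by
    apply constant_of_has_deriv_right_zero (hfd.continuous.continuousOn)
    intro x hx
    have h1 : HasDerivAt f (Atil * deriv (deriv (deriv (deriv w))) x - k * Btil * deriv u x) x := by
      exact ((hd3d x).hasDerivAt.const_mul Atil).sub ((hud x).hasDerivAt.const_mul (k*Btil))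
    rw [heq₁ x (Ico_subset_Icc_self hx)] at h1
    exact h1.hasDerivWithinAt
  have hkey : ∀ x ∈ Icc (0:ℝ) L, Atil * deriv (deriv (deriv w)) x = k * Btil * u x := by
    intro x hx
    have hL' : f L = f 0 := hfc L (right_mem_Icc.2 hL.le)
    have : f L = 0 := hbcL
    have h0 : f 0 = 0 := by rw [← hL']; exact this
    have := hfc x hx
    rw [h0] at this
    simpa [hf_def, sub_eq_zero] using this
  -- Step B: u'' = c * u on Icc
  set c : ℝ := sC + k * Btil ^ 2 / Atil with hc_def
  have hc : 0 < c := by positivity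
  have hu'' : ∀ x ∈ Icc (0:ℝ) L, deriv (deriv u) x = c * u x := by
    intro x hx
    have h2 := heq₂ x hx
    have h3 : deriv (deriv (deriv w)) x = k * Btil * u x / Atil := by
      field_simp [eq_div_iff hA.ne']
      linarith [hkey x hx]
    rw [h3] at h2
    field_simp [hc_def] at h2 ⊢
    rw [hc_def]; field_simp; linarith [h2]
  -- Step C: energy ⇒ deriv u 0 = 0
  set E : ℝ → ℝ := fun x => c * u x ^ 2 - (deriv u x) ^ 2 with hE_def
  have hEc : ∀ x ∈ Icc (0:ℝ) L, E x = E 0 := by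
    apply constant_of_has_deriv_right_zero
    · exact ((continuous_const.mul (hud.continuous.pow 2)).sub (hdud.continuous.pow 2)).continuousOn
    intro x hx
    have h1 : HasDerivAt E (c * (2 * u x * deriv u x) - 2 * deriv u x * deriv (deriv u) x) x := by
      have hu' : HasDerivAt (fun y => c * u y ^ 2) (c * (2 * u x * deriv u x)) x := by
        exact (((hud x).hasDerivAt.pow 2).const_mul c).congr_deriv (by ring)
      have hv' : HasDerivAt (fun y => (deriv u y) ^ 2) (2 * deriv u x * deriv (deriv u) x) x := by
        have := ((hdud x).hasDerivAt.pow 2)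
        exact this.congr_deriv (by ring)
      exact hu'.sub hv'
    have hz : c * (2 * u x * deriv u x) - 2 * deriv u x * deriv (deriv u) x = 0 := by
      rw [hu'' x (Ico_subset_Icc_self hx)]; ring
    rw [hz] at h1
    exact h1.hasDerivWithinAt
  have hu'0 : deriv u 0 = 0 := by
    have hEL := hEc L (right_mem_Icc.2 hL.le)
    simp only [hE_def, hu0, hu'L] at hEL
    nlinarith [sq_nonneg (u L), sq_nonneg (deriv u 0), mul_nonneg hc.le (sq_nonneg (u L))]
  -- Step D: ODE uniqueness ⇒ u ≡ 0, deriv u ≡ 0 on Icc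
  set v : ℝ → ℝ × ℝ → ℝ × ℝ := fun _ p => (p.2, c • p.1) with hv_def
  have hlip : ∀ t, LipschitzWith (max 1 (‖c‖₊ * 1)) (v t) := by
    intro t
    exact LipschitzWith.prodMk LipschitzWith.prod_snd
      ((lipschitzWith_smul c).comp LipschitzWith.prod_fst)
  have huz : ∀ x ∈ Icc (0:ℝ) L, (fun t => (u t, deriv u t)) x = (fun _ => ((0:ℝ),(0:ℝ))) x := by
    apply ODE_solution_unique (v := v) hlip
    · exact (hud.continuous.prodMk hdud.continuous).continuousOn
    · intro t ht
      have h1 : HasDerivAt (fun s => (u s, deriv u s)) (deriv u t, c * u t) t := by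
        have := (hud t).hasDerivAt.prodMk ((hdud t).hasDerivAt)
        rwa [hu'' t (Ico_subset_Icc_self ht)] at this
      exact h1.hasDerivWithinAt
    · exact continuousOn_const
    · intro t ht
      have h0 : HasDerivAt (fun _ : ℝ => ((0:ℝ),(0:ℝ))) (0, 0) t := hasDerivAt_const t _
      convert h0.hasDerivWithinAt using 1
      simp [hv_def]
    · simp [hu0, hu'0]
  have huzero : ∀ x ∈ Icc (0:ℝ) L, u x = 0 := by
    intro x hx
    have := huz x hx
    exact congrArg Prod.fst this
  -- Step E: cascade for w
  have hw3z : ∀ x ∈ Icc (0:ℝ) L, deriv (deriv (deriv w)) x = 0 := by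
    intro x hx
    have := hkey x hx
    rw [huzero x hx] at this
    have : Atil * deriv (deriv (deriv w)) x = 0 := by simpa using this
    exact (mul_eq_zero.mp this).resolve_left hA.ne'
  -- w'' constant, equal to its value at 0; but we know w''(L)=0, so go backwards:
  have hw2c : ∀ x ∈ Icc (0:ℝ) L, deriv (deriv w) x = deriv (deriv w) 0 := by
    apply constant_of_has_deriv_right_zero hd2d.continuous.continuousOn
    intro x hx
    have h1 : HasDerivAt (deriv (deriv w)) 0 x := by
      have := (hd2d x).hasDerivAt
      rwa [hw3z x (Ico_subset_Icc_self hx)] at this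
    exact h1.hasDerivWithinAt
  have hw2z : ∀ x ∈ Icc (0:ℝ) L, deriv (deriv w) x = 0 := by
    intro x hx
    have h0 : deriv (deriv w) 0 = 0 := by
      have := hw2c L (right_mem_Icc.2 hL.le); rw [hw''L] at this; exact this.symm
    rw [hw2c x hx, h0]
  have hw1z : ∀ x ∈ Icc (0:ℝ) L, deriv w x = 0 := by
    have h := constant_of_has_deriv_right_zero (f := deriv w) (a := 0) (b := L)
      hd1d.continuous.continuousOn ?_
    · intro x hx; rw [h x hx, hw'0]
    · intro x hx
      have h1 : HasDerivAt (deriv w) 0 x := by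
        have := (hd1d x).hasDerivAt
        rwa [hw2z x (Ico_subset_Icc_self hx)] at this
      exact h1.hasDerivWithinAt
  have hwz : ∀ x ∈ Icc (0:ℝ) L, w x = 0 := by
    have h := constant_of_has_deriv_right_zero (f := w) (a := 0) (b := L)
      hwd.continuous.continuousOn ?_
    · intro x hx; rw [h x hx, hw0]
    · intro x hx
      have h1 : HasDerivAt w 0 x := by
        have := (hwd x).hasDerivAt
        rwa [hw1z x (Ico_subset_Icc_self hx)] at this
      exact h1.hasDerivWithinAt
  exact fun x hx => ⟨hwz x hx, huzero x hx⟩
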